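/- Let J be an almost complex structure on h_{2n+2} interchanging V₁ = Span{X¹,…,X^{n+1}} and V₂ = Span{X^{n+2},…,X^{2n+2}}, and let ln = Span{X^{n+2},…,X^{2n+1}, JX^{n+2},…,JX^{2n+1}}. Then ln is an IJ-subalgebra of h_{2n+2}: it is a J-invariant Lie subalgebra containing the image of the Nijenhuis tensor, and [X,Y] + J[X,JY] ∈ ln whenever X ∈ ln and Y ∈ h_{2n+2}. -/

import Mathlib

/-- For an almost complex structure `J` on `h_{2n+2}` interchanging `V₁` and `V₂`,
the Nijenhuis space `ln = Span{X (n+1),…,X (2n), J (X (n+1)),…,J (X (2n))}` is an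
IJ-subalgebra: a J-invariant Lie subalgebra containing the image of the Nijenhuis
tensor, with `⁅x, y⁆ + J ⁅x, J y⁆ ∈ ln` for `x ∈ ln`, `y ∈ L`. -/
theorem nijenhuis_space_IJ_subalgebra (n : ℕ) (L : Type) [LieRing L] [LieAlgebra ℝ L]
    (X : Module.Basis (Fin (2 * n + 2)) ℝ L)
    (hbr : ∀ i j : Fin (2 * n + 2), ⁅X i, X j⁆ =
      if hij : i.val < n ∧ j.val = n then X ⟨n + 1 + i.val, by omega⟩
      else if hji : j.val < n ∧ i.val = n then -X ⟨n + 1 + j.val, by omega⟩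
      else 0)
    (J : L →ₗ[ℝ] L) (hJ : ∀ x, J (J x) = -x)
    (hJ12 : ∀ i : Fin (2 * n + 2), i.val ≤ n →
      J (X i) ∈ Submodule.span ℝ {z : L | ∃ j : Fin (2 * n + 2), n + 1 ≤ j.val ∧ z = X j})
    (hJ21 : ∀ i : Fin (2 * n + 2), n + 1 ≤ i.val →
      J (X i) ∈ Submodule.span ℝ {z : L | ∃ j : Fin (2 * n + 2), j.val ≤ n ∧ z = X j})
    (ln : Submodule ℝ L)
    (hln : ln = Submodule.span ℝ {z : L | ∃ i : Fin (2 * n + 2), n + 1 ≤ i.val ∧ i.val ≤ 2 * n ∧ (z = X i ∨ z = J (X i))}) :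
    (∀ x ∈ ln, ∀ y ∈ ln, ⁅x, y⁆ ∈ ln) ∧
    (∀ x ∈ ln, J x ∈ ln) ∧
    (∀ x y : L, ⁅x, y⁆ + J ⁅J x, y⁆ + J ⁅x, J y⁆ - ⁅J x, J y⁆ ∈ ln) ∧
    (∀ x ∈ ln, ∀ y : L, ⁅x, y⁆ + J ⁅x, J y⁆ ∈ ln) := by
  subst hln
  -- W = span of the X i, n+1 ≤ i ≤ 2n
  set W : Submodule ℝ L := Submodule.span ℝ
    {z : L | ∃ i : Fin (2 * n + 2), n + 1 ≤ i.val ∧ i.val ≤ 2 * n ∧ z = X i} with hWdef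
  set ln : Submodule ℝ L := Submodule.span ℝ
    {z : L | ∃ i : Fin (2 * n + 2), n + 1 ≤ i.val ∧ i.val ≤ 2 * n ∧ (z = X i ∨ z = J (X i))}
    with hlndef
  have hWln : W ≤ ln := Submodule.span_mono (by
    rintro z ⟨i, h1, h2, rfl⟩; exact ⟨i, h1, h2, Or.inl rfl⟩)
  have hbase : ∀ i j : Fin (2 * n + 2), ⁅X i, X j⁆ ∈ W := by
    intro i j
    rw [hbr]
    split_ifs with h1 h2
    · exact Submodule.subset_span ⟨⟨n + 1 + i.val, by omega⟩,
        by show n + 1 ≤ n + 1 + i.val; omega, by show n + 1 + i.val ≤ 2 * n; omega, rfl⟩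
    · exact neg_mem (Submodule.subset_span ⟨⟨n + 1 + j.val, by omega⟩,
        by show n + 1 ≤ n + 1 + j.val; omega, by show n + 1 + j.val ≤ 2 * n; omega, rfl⟩)
    · exact zero_mem W
  have htop : ∀ y : L, y ∈ Submodule.span ℝ (Set.range X) := by
    rw [X.span_eq]; intro y; trivial
  have hright : ∀ (i : Fin (2 * n + 2)) (y : L), ⁅X i, y⁆ ∈ W := by
    intro i y
    refine Submodule.span_induction (p := fun y _ => ⁅X i, y⁆ ∈ W) ?_ ?_ ?_ ?_ (htop y)
    · rintro z ⟨j, rfl⟩; exact hbase i j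
    · simp
    · intro a b _ _ ha hb; rw [lie_add]; exact add_mem ha hb
    · intro r a _ ha; rw [lie_smul]; exact Submodule.smul_mem _ _ ha
  have hW : ∀ x y : L, ⁅x, y⁆ ∈ W := by
    intro x y
    refine Submodule.span_induction (p := fun x _ => ⁅x, y⁆ ∈ W) ?_ ?_ ?_ ?_ (htop x)
    · rintro z ⟨j, rfl⟩; exact hright j y
    · simp
    · intro a b _ _ ha hb; rw [add_lie]; exact add_mem ha hb
    · intro r a _ ha; rw [smul_lie]; exact Submodule.smul_mem _ _ ha
  have hJln : ∀ x ∈ ln, J x ∈ ln := by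
    intro x hx
    have : ln ≤ Submodule.comap J ln := by
      rw [hlndef]
      refine Submodule.span_le.2 ?_
      rintro z ⟨i, h1, h2, rfl | rfl⟩
      · exact Submodule.subset_span ⟨i, h1, h2, Or.inr rfl⟩
      · show J (J (X i)) ∈ ln
        rw [hJ]
        exact neg_mem (Submodule.subset_span ⟨i, h1, h2, Or.inl rfl⟩)
    exact this hx
  refine ⟨fun x _ y _ => hWln (hW x y), hJln, ?_, ?_⟩
  · intro x y
    exact sub_mem (add_mem (add_mem (hWln (hW x y)) (hJln _ (hWln (hW (J x) y))))
      (hJln _ (hWln (hW x (J y))))) (hWln (hW (J x) (J y)))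
  · intro x _ y
    exact add_mem (hWln (hW x y)) (hJln _ (hWln (hW x (J y))))
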